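/- arXiv:1803.02812 — 2 statements merged into one kernel-verified Lean document; each statement's English description precedes it below -/
import Mathlib

section
/- Let G be a topological group that is a SIN-group (the conjugation-invariant neighborhoods of the identity form a neighborhood basis at the identity), N an open normal subgroup of G, F = G/N, φ : G → F the quotient homomorphism, and σ : F → G a section of φ with σ(1_F) = 1_G. Let X be a complex Hilbert space and π a group homomorphism from N into the group of unitary operators on X that is norm-continuous, i.e. the map n ↦ π(n) from N to the bounded operators on X is continuous for the operator-norm topology. Let π' be the induced representation of G on ℓ²(F, X), determined by (π'(g)ξ)(t) = π(σ(t)·g·σ(t·φ(g))⁻¹)(ξ(t·φ(g))). Then π' is norm-continuous: the map g ↦ π'(g) from G to the bounded operators on ℓ²(F, X) is continuous for the operator-norm topology. -/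
open scoped ENNReal

/-- A topological group is a SIN-group if the conjugation-invariant neighborhoods of the
identity form a neighborhood basis at the identity. -/
def IsSINGroup (G : Type*) [Group G] [TopologicalSpace G] : Prop :=
  ∀ U ∈ nhds (1 : G), ∃ V ∈ nhds (1 : G), V ⊆ U ∧ ∀ a : G, ∀ v ∈ V, a * v * a⁻¹ ∈ V

lemma lp_norm_le_of_forall_le {ι : Type*} {X : Type*} [NormedAddCommGroup X]
    (η ξ : lp (fun _ : ι => X) 2) (C : ℝ) (hC : 0 ≤ C)
    (h : ∀ t, ‖η t‖ ≤ C * ‖ξ t‖) : ‖η‖ ≤ C * ‖ξ‖ := by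
  have hp : 0 < (2 : ℝ≥0∞).toReal := by norm_num
  rw [← Real.rpow_le_rpow_iff (lp.norm_nonneg' η) (by positivity) hp,
    lp.norm_rpow_eq_tsum hp η]
  have hsumξ := (lp.memℓp ξ).summable hp
  have hsumη := (lp.memℓp η).summable hp
  calc ∑' t, ‖η t‖ ^ (2 : ℝ≥0∞).toReal
      ≤ ∑' t, C ^ (2 : ℝ≥0∞).toReal * ‖ξ t‖ ^ (2 : ℝ≥0∞).toReal := by
        refine Summable.tsum_le_tsum (fun t => ?_) hsumη (hsumξ.mul_left _)
        rw [← Real.mul_rpow hC (norm_nonneg _)]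
        exact Real.rpow_le_rpow (norm_nonneg _) (h t) hp.le
    _ = C ^ (2 : ℝ≥0∞).toReal * ∑' t, ‖ξ t‖ ^ (2 : ℝ≥0∞).toReal := tsum_mul_left
    _ = (C * ‖ξ‖) ^ (2 : ℝ≥0∞).toReal := by
        rw [← lp.norm_rpow_eq_tsum hp ξ, Real.mul_rpow hC (lp.norm_nonneg' ξ)]



/-- If `G` is a SIN-group, `N` an open normal subgroup, `σ` a section of the quotient map
`φ : G → G ⧸ N` with `σ 1 = 1`, and `π` a norm-continuous unitary representation of `N` on a
complex Hilbert space `X`, then the induced representation `π'` of `G` on `ℓ²(G ⧸ N, X)`,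
determined by `(π' g ξ) t = π (σ t * g * (σ (t * φ g))⁻¹) (ξ (t * φ g))`, is also
norm-continuous. -/
theorem induced_representation_norm_continuous
    (G : Type*) [Group G] [TopologicalSpace G] [IsTopologicalGroup G]
    (hSIN : IsSINGroup G)
    (N : Subgroup G) [N.Normal] (hNopen : IsOpen (N : Set G))
    (σ : G ⧸ N → G)
    (hσ : ∀ t : G ⧸ N, QuotientGroup.mk' N (σ t) = t)
    (hσ1 : σ 1 = 1)
    (X : Type*) [NormedAddCommGroup X] [InnerProductSpace ℂ X] [CompleteSpace X]
    (π : N →* (X ≃ₗᵢ[ℂ] X))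
    (hπcont : Continuous fun n : N =>
      ((π n).toLinearIsometry.toContinuousLinearMap : X →L[ℂ] X))
    (π' : G →* (lp (fun _ : G ⧸ N => X) 2 ≃ₗᵢ[ℂ] lp (fun _ : G ⧸ N => X) 2))
    (hπ' : ∀ (g : G) (ξ : lp (fun _ : G ⧸ N => X) 2) (t : G ⧸ N) (n : N),
      (n : G) = σ t * g * (σ (t * QuotientGroup.mk' N g))⁻¹ →
        (π' g ξ : ∀ _ : G ⧸ N, X) t = π n (ξ (t * QuotientGroup.mk' N g))) :
    Continuous fun g : G =>
      ((π' g).toLinearIsometry.toContinuousLinearMap :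
        lp (fun _ : G ⧸ N => X) 2 →L[ℂ] lp (fun _ : G ⧸ N => X) 2) := by
  have key : ∀ ε : ℝ, 0 < ε → ∃ W ∈ nhds (1 : G), ∀ g ∈ W,
      ∀ ξ : lp (fun _ : G ⧸ N => X) 2, ‖(π' g) ξ - ξ‖ ≤ ε * ‖ξ‖ := by
    intro ε hε
    -- norm continuity of π at 1
    have h1 : Filter.Tendsto (fun n : N =>
        ((π n).toLinearIsometry.toContinuousLinearMap : X →L[ℂ] X)) (nhds 1)
        (nhds ((π 1).toLinearIsometry.toContinuousLinearMap)) := hπcont.continuousAt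
    have hπ1 : ((π 1).toLinearIsometry.toContinuousLinearMap : X →L[ℂ] X)
        = ContinuousLinearMap.id ℂ X := by
      ext x; simp
    have hev : {n : N | ‖((π n).toLinearIsometry.toContinuousLinearMap : X →L[ℂ] X)
        - ContinuousLinearMap.id ℂ X‖ < ε} ∈ nhds (1 : N) := by
      have := Metric.tendsto_nhds.mp h1 ε hε
      rw [hπ1] at this
      simp [dist_eq_norm] at this
      exact this
    rw [nhds_subtype_eq_comap] at hev
    obtain ⟨U, hU, hUsub⟩ := Filter.mem_comap.mp hev
    have hU1 : U ∈ nhds (1 : G) := by simpa using hU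
    obtain ⟨V, hV, hVsub, hVconj⟩ :=
      hSIN (U ∩ N) (Filter.inter_mem hU1 (hNopen.mem_nhds N.one_mem))
    refine ⟨V, hV, fun g hg ξ => ?_⟩
    have hgN : g ∈ N := (hVsub hg).2
    have hφ : QuotientGroup.mk' N g = 1 := (QuotientGroup.eq_one_iff g).mpr hgN
    refine lp_norm_le_of_forall_le _ _ ε hε.le fun t => ?_
    have hconj : σ t * g * (σ t)⁻¹ ∈ V := hVconj (σ t) g hg
    set n : N := ⟨σ t * g * (σ t)⁻¹, (hVsub hconj).2⟩ with hn
    have heq := hπ' g ξ t n (by simp [hn, hφ])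
    have ht1 : t * QuotientGroup.mk' N g = t := by rw [hφ, mul_one]
    rw [ht1] at heq
    have hcoe : ((π' g) ξ - ξ : lp (fun _ : G ⧸ N => X) 2) t = (π' g ξ) t - ξ t := by
      simp [lp.coeFn_sub]
    rw [hcoe, heq]
    have hnU : (n : G) ∈ U := (hVsub hconj).1
    have hnbd : ‖((π n).toLinearIsometry.toContinuousLinearMap : X →L[ℂ] X)
        - ContinuousLinearMap.id ℂ X‖ < ε := hUsub hnU
    calc ‖π n (ξ t) - ξ t‖
        = ‖(((π n).toLinearIsometry.toContinuousLinearMap : X →L[ℂ] X)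
            - ContinuousLinearMap.id ℂ X) (ξ t)‖ := by simp
      _ ≤ ‖((π n).toLinearIsometry.toContinuousLinearMap : X →L[ℂ] X)
            - ContinuousLinearMap.id ℂ X‖ * ‖ξ t‖ := ContinuousLinearMap.le_opNorm _ _
      _ ≤ ε * ‖ξ t‖ := by
          exact mul_le_mul_of_nonneg_right hnbd.le (norm_nonneg _)
  rw [continuous_iff_continuousAt]
  intro g₀
  rw [ContinuousAt, Metric.tendsto_nhds]
  intro ε hε
  obtain ⟨W, hW, hWbound⟩ := key (ε / 2) (by positivity)
  have hmem : {g : G | g * g₀⁻¹ ∈ W} ∈ nhds g₀ := by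
    have hc : Continuous fun g : G => g * g₀⁻¹ := continuous_id.mul continuous_const
    have := hc.continuousAt (x := g₀) |>.preimage_mem_nhds (by simpa using hW)
    exact this
  filter_upwards [hmem] with g hg
  rw [dist_eq_norm]
  have hbound : ‖((π' g).toLinearIsometry.toContinuousLinearMap :
      lp (fun _ : G ⧸ N => X) 2 →L[ℂ] lp (fun _ : G ⧸ N => X) 2)
      - (π' g₀).toLinearIsometry.toContinuousLinearMap‖ ≤ ε / 2 := by
    refine ContinuousLinearMap.opNorm_le_bound _ (by positivity) fun ξ => ?_
    have hsplit : π' g = π' (g * g₀⁻¹) * π' g₀ := by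
      rw [← map_mul, inv_mul_cancel_right]
    have happ : (π' g) ξ = (π' (g * g₀⁻¹)) ((π' g₀) ξ) := by
      rw [hsplit]; rfl
    have : ‖(π' g) ξ - (π' g₀) ξ‖ ≤ ε / 2 * ‖(π' g₀) ξ‖ := by
      rw [happ]; exact hWbound _ hg _
    simpa [LinearIsometryEquiv.norm_map] using this
  linarith [hbound]
end

section
/- Let G be a group, N a normal subgroup of G, F = G/N, φ : G → F the quotient homomorphism, σ : F → G a section of φ with σ(1_F) = 1_G, X a complex Hilbert space, π a group homomorphism from N into the group of unitary operators on X, and let π' be the induced representation of G on ℓ²(F, X), determined by (π'(g)ξ)(t) = π(σ(t)·g·σ(t·φ(g))⁻¹)(ξ(t·φ(g))). Then for every finite family g₁, …, g_m of elements of N and every family of complex scalars λ₁, …, λ_m, the operator norms satisfy ‖Σᵢ λᵢ·π(gᵢ)‖ ≤ ‖Σᵢ λᵢ·π'(gᵢ)‖, where the left-hand sum is a bounded operator on X and the right-hand sum is a bounded operator on ℓ²(F, X). -/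
open scoped ENNReal

/-- Let `G` be a group, `N` a normal subgroup, `σ` a section of the quotient map
`φ : G → G ⧸ N` with `σ 1 = 1`, `π` a unitary representation of `N` on a complex Hilbert
space `X`, and `π'` the induced representation of `G` on `ℓ²(G ⧸ N, X)`, determined by
`(π' g ξ) t = π (σ t * g * (σ (t * φ g))⁻¹) (ξ (t * φ g))`.  Then for any finite family
`g₁, …, g_m` of elements of `N` and complex scalars `λ₁, …, λ_m` the operator norms satisfy
`‖Σᵢ λᵢ • π gᵢ‖ ≤ ‖Σᵢ λᵢ • π' gᵢ‖`. -/
theorem norm_sum_le_norm_sum_induced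
    (G : Type*) [Group G] (N : Subgroup G) [N.Normal]
    (σ : G ⧸ N → G)
    (hσ : ∀ t : G ⧸ N, QuotientGroup.mk' N (σ t) = t)
    (hσ1 : σ 1 = 1)
    (X : Type*) [NormedAddCommGroup X] [InnerProductSpace ℂ X] [CompleteSpace X]
    (π : N →* (X ≃ₗᵢ[ℂ] X))
    (π' : G →* (lp (fun _ : G ⧸ N => X) 2 ≃ₗᵢ[ℂ] lp (fun _ : G ⧸ N => X) 2))
    (hπ' : ∀ (g : G) (ξ : lp (fun _ : G ⧸ N => X) 2) (t : G ⧸ N) (n : N),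
      (n : G) = σ t * g * (σ (t * QuotientGroup.mk' N g))⁻¹ →
        (π' g ξ : ∀ _ : G ⧸ N, X) t = π n (ξ (t * QuotientGroup.mk' N g)))
    (m : ℕ) (g : Fin m → N) (lam : Fin m → ℂ) :
    ‖∑ i : Fin m, lam i • ((π (g i)).toLinearIsometry.toContinuousLinearMap : X →L[ℂ] X)‖ ≤
      ‖∑ i : Fin m, lam i • ((π' (g i : G)).toLinearIsometry.toContinuousLinearMap :
        lp (fun _ : G ⧸ N => X) 2 →L[ℂ] lp (fun _ : G ⧸ N => X) 2)‖ := by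
  classical
  set T : lp (fun _ : G ⧸ N => X) 2 →L[ℂ] lp (fun _ : G ⧸ N => X) 2 :=
    ∑ i : Fin m, lam i • ((π' (g i : G)).toLinearIsometry.toContinuousLinearMap) with hT
  refine ContinuousLinearMap.opNorm_le_bound _ (norm_nonneg T) fun x => ?_
  set ξ : lp (fun _ : G ⧸ N => X) 2 := lp.single 2 (1 : G ⧸ N) x with hξdef
  have hξnorm : ‖ξ‖ = ‖x‖ := by
    rw [hξdef]; exact lp.norm_single (E := fun _ : G ⧸ N => X) (p := 2) (by norm_num) (1 : G ⧸ N) x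
  have hξ1 : (ξ : ∀ _ : G ⧸ N, X) 1 = x := by rw [hξdef]; exact lp.single_apply_self (E := fun _ : G ⧸ N => X) 2 (1 : G ⧸ N) x
  have hmk : ∀ i, QuotientGroup.mk' N ((g i : G)) = 1 := fun i =>
    (QuotientGroup.eq_one_iff _).mpr (g i).2
  have key : ∀ i, ((π' (g i : G)) ξ : ∀ _ : G ⧸ N, X) 1 = π (g i) x := by
    intro i
    have h := hπ' (g i : G) ξ 1 (g i) (by rw [hmk, mul_one, hσ1]; group)
    rw [h, hmk, mul_one, hξ1]
  have hTξ : ((T ξ : lp (fun _ : G ⧸ N => X) 2) : ∀ _ : G ⧸ N, X) 1 =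
      ∑ i : Fin m, lam i • π (g i) x := by
    rw [hT, ContinuousLinearMap.sum_apply, lp.coeFn_sum, Finset.sum_apply]
    refine Finset.sum_congr rfl fun i _ => ?_
    rw [ContinuousLinearMap.smul_apply, lp.coeFn_smul, Pi.smul_apply]
    congr 1
    exact key i
  calc ‖(∑ i : Fin m, lam i • ((π (g i)).toLinearIsometry.toContinuousLinearMap : X →L[ℂ] X)) x‖
      = ‖((T ξ : lp (fun _ : G ⧸ N => X) 2) : ∀ _ : G ⧸ N, X) 1‖ := by
        rw [hTξ]; simp [ContinuousLinearMap.sum_apply]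
    _ ≤ ‖T ξ‖ := lp.norm_apply_le_norm (by norm_num) (T ξ) 1
    _ ≤ ‖T‖ * ‖ξ‖ := T.le_opNorm ξ
    _ = ‖T‖ * ‖x‖ := by rw [hξnorm]
end
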